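/- For all natural numbers r, s with r > s ≥ 1, the following identity holds in ℤ[x, y]: r·∑_{ℓ=0}^{r−s−2} x^{r−2−ℓ}·y^{s+ℓ} − s·∑_{ℓ=0}^{r−s} x^{r−1−ℓ}·y^{s−1+ℓ} = −s·(x^{r−1}·y^{s−1} + x^{s−1}·y^{r−1}) + (r − s)·∑_{ℓ=1}^{⌊(r−s)/2⌋} m_{(r−1−ℓ, s−1+ℓ)}, where an empty sum is zero. -/

import Mathlib

open MvPolynomial

local notation "x" => (MvPolynomial.X 0 : MvPolynomial (Fin 2) ℤ)
local notation "y" => (MvPolynomial.X 1 : MvPolynomial (Fin 2) ℤ)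

/-- The two-variable symmetric monomial `m_{(a,b)}` (for `a ≥ b`):
`x^a y^b + x^b y^a` if `a ≠ b`, and `x^a y^a` if `a = b`. -/
noncomputable def msym (a b : ℕ) : MvPolynomial (Fin 2) ℤ :=
  if a = b then x ^ a * y ^ a else x ^ a * y ^ b + x ^ b * y ^ a

private lemma msym_add (e a b : ℕ) :
    msym (e + a) (e + b) = x ^ e * y ^ e * msym a b := by
  unfold msym
  by_cases h : a = b
  · simp [h, pow_add]; ring
  · rw [if_neg h, if_neg (by omega), pow_add, pow_add, pow_add, pow_add]; ring

private lemma stepA (d : ℕ) :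
    ∑ ℓ ∈ Finset.range (d - 1), x ^ (d - 1 - ℓ) * y ^ (1 + ℓ)
      = ∑ ℓ ∈ Finset.Icc 1 (d - 1), x ^ (d - ℓ) * y ^ ℓ := by
  refine Finset.sum_nbij' (fun ℓ => ℓ + 1) (fun ℓ => ℓ - 1) ?_ ?_ ?_ ?_ ?_
  · intro a ha; simp only [Finset.mem_range] at ha; simp only [Finset.mem_Icc]; omega
  · intro a ha; simp only [Finset.mem_Icc] at ha; simp only [Finset.mem_range]; omega
  · intro a _; omega
  · intro a ha; simp only [Finset.mem_Icc] at ha; omega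
  · intro a ha; simp only [Finset.mem_range] at ha
    rw [show d - (a + 1) = d - 1 - a from by omega, show a + 1 = 1 + a from by omega]

private lemma stepB (d : ℕ) (hd : 1 ≤ d) :
    ∑ ℓ ∈ Finset.range (d + 1), x ^ (d - ℓ) * y ^ ℓ
      = x ^ d + y ^ d + ∑ ℓ ∈ Finset.Icc 1 (d - 1), x ^ (d - ℓ) * y ^ ℓ := by
  obtain ⟨e, rfl⟩ : ∃ e, d = e + 1 := ⟨d - 1, by omega⟩
  rw [Finset.sum_range_succ' _ (e + 1), Finset.sum_range_succ]
  have h1 : ∑ ℓ ∈ Finset.Icc 1 (e + 1 - 1), x ^ (e + 1 - ℓ) * y ^ ℓ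
      = ∑ k ∈ Finset.range e, x ^ (e + 1 - (k + 1)) * y ^ (k + 1) := by
    rw [show Finset.Icc 1 (e + 1 - 1) = Finset.Ico 1 (e + 1) from by
        rw [Finset.Ico_add_one_right_eq_Icc]; norm_num, Finset.sum_Ico_eq_sum_range]
    exact Finset.sum_congr (by norm_num) fun k _ => by
      rw [show 1 + k = k + 1 from by omega]
  rw [h1, show e + 1 - (e + 1) = 0 from by omega, show e + 1 - 0 = e + 1 from rfl]
  simp only [pow_zero, one_mul, mul_one]
  ring

/-- reflection of the second half. -/
private lemma stepC2 (d : ℕ) (hd : 1 ≤ d) :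
    ∑ ℓ ∈ Finset.Icc 1 (d / 2), x ^ ℓ * y ^ (d - ℓ)
      = ∑ ℓ ∈ Finset.Icc (d - d / 2) (d - 1), x ^ (d - ℓ) * y ^ ℓ := by
  refine Finset.sum_nbij' (fun ℓ => d - ℓ) (fun ℓ => d - ℓ) ?_ ?_ ?_ ?_ ?_
  · intro a ha; simp only [Finset.mem_Icc] at ha
    simp only [Finset.mem_Icc]; omega
  · intro a ha; simp only [Finset.mem_Icc] at ha
    simp only [Finset.mem_Icc]; omega
  · intro a ha; simp only [Finset.mem_Icc] at ha; omega
  · intro a ha; simp only [Finset.mem_Icc] at ha; omega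
  · intro a ha; simp only [Finset.mem_Icc] at ha
    rw [show d - (d - a) = a from by omega]

private lemma stepC (d : ℕ) (hd : 1 ≤ d) :
    ∑ ℓ ∈ Finset.Icc 1 (d / 2), msym (d - ℓ) ℓ
      = ∑ ℓ ∈ Finset.Icc 1 (d - 1), x ^ (d - ℓ) * y ^ ℓ := by
  have key : ∀ ℓ ∈ Finset.Icc 1 (d / 2),
      msym (d - ℓ) ℓ = x ^ (d - ℓ) * y ^ ℓ + x ^ ℓ * y ^ (d - ℓ)
        - (if ℓ = d / 2 ∧ 2 ∣ d then x ^ ℓ * y ^ ℓ else 0) := by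
    intro ℓ hℓ
    simp only [Finset.mem_Icc] at hℓ
    unfold msym
    by_cases h : d - ℓ = ℓ
    · rw [if_pos h, if_pos (by omega), h]; ring
    · rw [if_neg h, if_neg (by omega)]; ring
  rw [Finset.sum_congr rfl key, Finset.sum_sub_distrib]
  have hind : (∑ ℓ ∈ Finset.Icc 1 (d / 2),
      if ℓ = d / 2 ∧ 2 ∣ d then x ^ ℓ * y ^ ℓ else 0)
      = if 2 ∣ d then x ^ (d / 2) * y ^ (d / 2) else 0 := by
    by_cases h2 : 2 ∣ d
    · rw [if_pos h2]
      simp only [h2, and_true]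
      rw [Finset.sum_ite_eq' (Finset.Icc 1 (d / 2)) (d / 2) fun ℓ => x ^ ℓ * y ^ ℓ,
        if_pos (by simp only [Finset.mem_Icc]; omega)]
    · rw [if_neg h2, Finset.sum_eq_zero fun ℓ _ => by simp [h2]]
  rw [Finset.sum_add_distrib, hind, stepC2 d hd]
  by_cases h2 : 2 ∣ d
  · obtain ⟨k, rfl⟩ := h2
    obtain ⟨j, rfl⟩ : ∃ j, k = j + 1 := ⟨k - 1, by omega⟩
    rw [if_pos ⟨j + 1, rfl⟩]
    rw [show 2 * (j + 1) / 2 = j + 1 from by omega,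
      show 2 * (j + 1) - (j + 1) = j + 1 from by omega]
    have e1 : Finset.Icc 1 (j + 1) = Finset.Ioc 0 (j + 1) := Finset.Icc_add_one_left_eq_Ioc 0 _
    have e2 : Finset.Icc (j + 1) (2 * (j + 1) - 1) = Finset.Ioc j (2 * (j + 1) - 1) :=
      Finset.Icc_add_one_left_eq_Ioc j _
    have e3 : Finset.Icc 1 (2 * (j + 1) - 1) = Finset.Ioc 0 (2 * (j + 1) - 1) :=
      Finset.Icc_add_one_left_eq_Ioc 0 _
    rw [e1, e2, e3,
      ← Finset.sum_Ioc_consecutive (fun ℓ => x ^ (2 * (j + 1) - ℓ) * y ^ ℓ)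
        (show 0 ≤ j from by omega) (show j ≤ 2 * (j + 1) - 1 from by omega),
      ← Finset.sum_Ioc_consecutive (fun ℓ => x ^ (2 * (j + 1) - ℓ) * y ^ ℓ)
        (show 0 ≤ j from by omega) (show j ≤ j + 1 from by omega),
      show Finset.Ioc j (j + 1) = {j + 1} from by rw [Nat.Ioc_succ_singleton],
      Finset.sum_singleton,
      show 2 * (j + 1) - (j + 1) = j + 1 from by omega]
    ring
  · rw [if_neg h2]
    have h1 : Finset.Icc 1 (d / 2) = Finset.Ioc 0 (d / 2) := Finset.Icc_add_one_left_eq_Ioc 0 _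
    have h3 : Finset.Icc (d - d / 2) (d - 1) = Finset.Ioc (d / 2) (d - 1) := by
      rw [show d - d / 2 = d / 2 + 1 from by omega]; exact Finset.Icc_add_one_left_eq_Ioc _ _
    have h4 : Finset.Icc 1 (d - 1) = Finset.Ioc 0 (d - 1) := Finset.Icc_add_one_left_eq_Ioc 0 _
    rw [h1, h3, h4, sub_zero,
      Finset.sum_Ioc_consecutive _ (by omega) (by omega)]

private lemma core' (s d : ℕ) (hd : 1 ≤ d) :
    ((s + d : ℕ) : MvPolynomial (Fin 2) ℤ)
        * ∑ ℓ ∈ Finset.range (d - 1), x ^ (d - 1 - ℓ) * y ^ (1 + ℓ)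
      - (s : MvPolynomial (Fin 2) ℤ) * ∑ ℓ ∈ Finset.range (d + 1), x ^ (d - ℓ) * y ^ ℓ
    = -(s : MvPolynomial (Fin 2) ℤ) * (x ^ d + y ^ d)
      + (d : MvPolynomial (Fin 2) ℤ) * ∑ ℓ ∈ Finset.Icc 1 (d / 2), msym (d - ℓ) ℓ := by
  rw [stepA, stepB d hd, stepC d hd]
  push_cast
  ring

theorem caseIII_monomial_expansion (r s : ℕ) (hs : 1 ≤ s) (hrs : s < r) :
    (r : MvPolynomial (Fin 2) ℤ)
        * ∑ ℓ ∈ Finset.range (r - s - 1), x ^ (r - 2 - ℓ) * y ^ (s + ℓ)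
      - (s : MvPolynomial (Fin 2) ℤ)
        * ∑ ℓ ∈ Finset.range (r - s + 1), x ^ (r - 1 - ℓ) * y ^ (s - 1 + ℓ)
    = -(s : MvPolynomial (Fin 2) ℤ) * (x ^ (r - 1) * y ^ (s - 1) + x ^ (s - 1) * y ^ (r - 1))
      + ((r - s : ℕ) : MvPolynomial (Fin 2) ℤ)
        * ∑ ℓ ∈ Finset.Icc 1 ((r - s) / 2), msym (r - 1 - ℓ) (s - 1 + ℓ) := by
  obtain ⟨d, rfl⟩ : ∃ d, r = s + d := ⟨r - s, by omega⟩
  obtain ⟨e, rfl⟩ : ∃ e, s = e + 1 := ⟨s - 1, by omega⟩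
  have hd : 1 ≤ d := by omega
  rw [show e + 1 + d - (e + 1) = d from by omega]
  have h1 : ∑ ℓ ∈ Finset.range (d - 1), x ^ (e + 1 + d - 2 - ℓ) * y ^ (e + 1 + ℓ)
      = x ^ e * y ^ e * ∑ ℓ ∈ Finset.range (d - 1), x ^ (d - 1 - ℓ) * y ^ (1 + ℓ) := by
    rw [Finset.mul_sum]
    refine Finset.sum_congr rfl fun ℓ hℓ => ?_
    simp only [Finset.mem_range] at hℓ
    rw [show e + 1 + d - 2 - ℓ = e + (d - 1 - ℓ) from by omega,
      show e + 1 + ℓ = e + (1 + ℓ) from by omega, pow_add, pow_add]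
    ring
  have h2 : ∑ ℓ ∈ Finset.range (d + 1), x ^ (e + 1 + d - 1 - ℓ) * y ^ (e + 1 - 1 + ℓ)
      = x ^ e * y ^ e * ∑ ℓ ∈ Finset.range (d + 1), x ^ (d - ℓ) * y ^ ℓ := by
    rw [Finset.mul_sum]
    refine Finset.sum_congr rfl fun ℓ hℓ => ?_
    simp only [Finset.mem_range] at hℓ
    rw [show e + 1 + d - 1 - ℓ = e + (d - ℓ) from by omega,
      show e + 1 - 1 + ℓ = e + ℓ from by omega, pow_add, pow_add]
    ring
  have h3 : ∑ ℓ ∈ Finset.Icc 1 (d / 2), msym (e + 1 + d - 1 - ℓ) (e + 1 - 1 + ℓ)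
      = x ^ e * y ^ e * ∑ ℓ ∈ Finset.Icc 1 (d / 2), msym (d - ℓ) ℓ := by
    rw [Finset.mul_sum]
    refine Finset.sum_congr rfl fun ℓ hℓ => ?_
    simp only [Finset.mem_Icc] at hℓ
    rw [show e + 1 + d - 1 - ℓ = e + (d - ℓ) from by omega,
      show e + 1 - 1 + ℓ = e + ℓ from by omega, msym_add]
  rw [h1, h2, h3, show e + 1 + d - 1 = e + d from by omega,
    show e + 1 - 1 = e from by omega]
  have hc := core' (e + 1) d hd
  push_cast at hc ⊢
  linear_combination (x ^ e * y ^ e) * hc
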